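/- For n ∈ {1,2} and every k ≥ 2, the forgetful map F̃_k(L_{7,n}) → F̃₂(L_{7,n}), (x₁,…,x_k) ↦ (x₁,x₂), admits a continuous section. -/

import Mathlib

open Complex

/-- `zeta t = exp(2πit/7)`. -/
noncomputable def zeta (t : ℝ) : ℂ := Complex.exp ((2 * Real.pi * t / 7 : ℝ) * Complex.I)

lemma abs_zeta (t : ℝ) : ‖zeta t‖ = 1 := Complex.norm_exp_ofReal_mul_I _

/-- The 3-sphere as the unit sphere in `ℂ × ℂ`. -/
def Sph3 : Set (ℂ × ℂ) := {p | ‖p.1‖ ^ 2 + ‖p.2‖ ^ 2 = 1}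

/-- The `ℤ/7`-action with parameter `n`: `k • (x₁, x₂) = (ζ^k x₁, ζ^{nk} x₂)`. -/
noncomputable def act (n : ℕ) (k : ZMod 7) (p : ↥Sph3) : ↥Sph3 :=
  ⟨(zeta k.val * p.1.1, zeta (n * k.val) * p.1.2), by
    have h := p.2
    simp only [Sph3, Set.mem_setOf_eq, norm_mul, abs_zeta, one_mul] at h ⊢
    exact h⟩

/-- Orbit equivalence for the `ℤ/7`-action with parameter `n`. -/
def lensRel (n : ℕ) (x y : ↥Sph3) : Prop := ∃ g : ZMod 7, y = act n g x

/-- The lens space `L_{7,n}`, the quotient of `S³` by the `ℤ/7`-action,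
with the quotient topology. -/
abbrev Lens (n : ℕ) := Quot (lensRel n)

/-- The configuration space of `k` (ordered) pairwise distinct points of `M`,
topologized as a subspace of `M^k`. -/
abbrev Conf (k : ℕ) (M : Type*) [TopologicalSpace M] := {f : Fin k → M // Function.Injective f}

/-- The orbit configuration space: tuples of points of `S³` lying in pairwise
distinct `ℤ/7`-orbits (for the action with parameter `n`). -/
abbrev OrbConf (n k : ℕ) :=
  {f : Fin k → ↥Sph3 // ∀ i j, i ≠ j → ∀ g : ZMod 7, f i ≠ act n g (f j)}

/-- The circle action on `S³` with parameter `n`. -/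
noncomputable def sAct (n : ℕ) (θ : ℝ) (p : ↥Sph3) : ↥Sph3 :=
  ⟨(Complex.exp ((θ : ℂ) * Complex.I) * p.1.1,
    Complex.exp (((n * θ : ℝ) : ℂ) * Complex.I) * p.1.2), by
    have h := p.2
    simp only [Sph3, Set.mem_setOf_eq, norm_mul, Complex.norm_exp_ofReal_mul_I, one_mul] at h ⊢
    exact h⟩

lemma sAct_zero (n : ℕ) (p : ↥Sph3) : sAct n 0 p = p := by
  simp [sAct]

lemma sAct_add (n : ℕ) (θ₁ θ₂ : ℝ) (p : ↥Sph3) :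
    sAct n θ₁ (sAct n θ₂ p) = sAct n (θ₁ + θ₂) p := by
  simp only [sAct, Subtype.mk.injEq, Prod.mk.injEq]
  constructor
  · rw [← mul_assoc, ← Complex.exp_add]
    push_cast; ring_nf
  · rw [← mul_assoc, ← Complex.exp_add]
    push_cast; ring_nf

lemma act_sAct (n : ℕ) (g : ZMod 7) (θ : ℝ) (p : ↥Sph3) :
    act n g (sAct n θ p) = sAct n θ (act n g p) := by
  simp only [act, sAct, Subtype.mk.injEq, Prod.mk.injEq]
  constructor <;> ring

lemma zeta_add (s t : ℝ) : zeta (s + t) = zeta s * zeta t := by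
  simp only [zeta, ← Complex.exp_add]
  push_cast; ring_nf

lemma zeta_seven_mul (m : ℕ) : zeta ((7 * m : ℕ) : ℝ) = 1 := by
  have : ((2 * Real.pi * ((7 * m : ℕ) : ℝ) / 7 : ℝ) : ℂ) * Complex.I
      = m * (2 * Real.pi * Complex.I) := by
    push_cast; ring
  rw [zeta, this]
  exact_mod_cast Complex.exp_nat_mul_two_pi_mul_I m

lemma zeta_mod (a : ℕ) : zeta (a : ℝ) = zeta ((a % 7 : ℕ) : ℝ) := by
  conv_lhs => rw [show (a : ℝ) = ((a % 7 : ℕ) : ℝ) + ((7 * (a / 7) : ℕ) : ℝ) by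
    rw [← Nat.cast_add]; exact_mod_cast congrArg (Nat.cast (R := ℝ)) (Nat.mod_add_div a 7).symm]
  rw [zeta_add, zeta_seven_mul, mul_one]

lemma zeta_congr {a b : ℕ} (h : a % 7 = b % 7) : zeta (a : ℝ) = zeta (b : ℝ) := by
  rw [zeta_mod a, zeta_mod b, h]

lemma act_act (n : ℕ) (g h : ZMod 7) (p : ↥Sph3) :
    act n g (act n h p) = act n (g + h) p := by
  have hval : (g.val + h.val) % 7 = (g + h).val % 7 := by
    rw [ZMod.val_add]; omega
  simp only [act, Subtype.mk.injEq, Prod.mk.injEq]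
  constructor
  · rw [← mul_assoc, ← zeta_add]
    congr 1
    rw [show ((g.val : ℝ) + h.val) = ((g.val + h.val : ℕ) : ℝ) by push_cast; ring]
    exact zeta_congr hval
  · rw [← mul_assoc, ← zeta_add]
    congr 1
    rw [show ((n : ℝ) * (g.val : ℝ) + (n : ℝ) * (h.val : ℝ)
        = ((n * g.val + n * h.val : ℕ) : ℝ)) by push_cast; ring,
      show ((n : ℝ) * ((g + h).val : ℝ) = ((n * (g + h).val : ℕ) : ℝ)) by push_cast; ring]
    refine zeta_congr ?_
    calc (n * g.val + n * h.val) % 7 = n * (g.val + h.val) % 7 := by ring_nf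
      _ = (n % 7) * ((g.val + h.val) % 7) % 7 := by rw [Nat.mul_mod]
      _ = (n % 7) * ((g + h).val % 7) % 7 := by rw [hval]
      _ = n * (g + h).val % 7 := by rw [← Nat.mul_mod]

lemma act_zero (n : ℕ) (p : ↥Sph3) : act n 0 p = p := by
  simp [act, zeta, ZMod.val_zero]
lemma exp_eq_exp_real {a b : ℝ}
    (h : Complex.exp ((a : ℂ) * Complex.I) = Complex.exp ((b : ℂ) * Complex.I)) :
    ∃ m : ℤ, a = b + 2 * Real.pi * m := by
  rw [Complex.exp_eq_exp_iff_exists_int] at h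
  obtain ⟨m, hm⟩ := h
  refine ⟨m, ?_⟩
  have := congrArg Complex.im hm
  simp at this
  linarith

lemma int_contra {x : ℝ} (hx0 : 0 < x) (hx : x < 2 * Real.pi / 7) {N : ℤ}
    (h : x = 2 * Real.pi / 7 * N) : False := by
  have hpi := Real.pi_pos
  have hN : (0 : ℝ) < N := by nlinarith
  have hN1 : (1 : ℝ) ≤ N := by exact_mod_cast (by exact_mod_cast hN : (0:ℤ) < N)
  nlinarith

lemma sph_ne_zero (p : ↥Sph3) : p.1.1 ≠ 0 ∨ p.1.2 ≠ 0 := by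
  by_contra hc
  push_neg at hc
  have h := p.2
  simp only [Sph3, Set.mem_setOf_eq, hc.1, hc.2, norm_zero] at h
  norm_num at h

lemma free {n : ℕ} (hn : n = 1 ∨ n = 2) {θ : ℝ} (hθ0 : 0 < θ) (hθ1 : θ < Real.pi / 7)
    (p : ↥Sph3) (g : ZMod 7) : sAct n θ p ≠ act n g p := by
  have hpi := Real.pi_pos
  intro h
  have h1 : Complex.exp ((θ : ℂ) * Complex.I) * p.1.1 = zeta g.val * p.1.1 :=
    congrArg (fun q : ↥Sph3 => q.1.1) h
  have h2 : Complex.exp (((n * θ : ℝ) : ℂ) * Complex.I) * p.1.2 = zeta (n * g.val) * p.1.2 :=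
    congrArg (fun q : ↥Sph3 => q.1.2) h
  have hn1 : 1 ≤ n := by rcases hn with h | h <;> omega
  have hn2 : n ≤ 2 := by rcases hn with h | h <;> omega
  simp only [zeta] at h1 h2
  rcases sph_ne_zero p with hp | hp
  · have he := mul_right_cancel₀ hp h1
    obtain ⟨m, hm⟩ := exp_eq_exp_real he
    refine int_contra hθ0 (by nlinarith) (N := (g.val : ℤ) + 7 * m) ?_
    push_cast
    rw [hm]; ring
  · have he := mul_right_cancel₀ hp h2
    obtain ⟨m, hm⟩ := exp_eq_exp_real he
    have hnθ0 : 0 < (n : ℝ) * θ := by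
      have : (0:ℝ) < n := by exact_mod_cast hn1
      positivity
    have hnθ1 : (n : ℝ) * θ < 2 * Real.pi / 7 := by
      have : (n : ℝ) ≤ 2 := by exact_mod_cast hn2
      nlinarith
    refine int_contra hnθ0 hnθ1 (N := ((n * g.val : ℕ) : ℤ) + 7 * m) ?_
    push_cast
    rw [hm]; ring

lemma sph_abs_le (p : ↥Sph3) : ‖p.1.1‖ ≤ 1 ∧ ‖p.1.2‖ ≤ 1 := by
  have h := p.2
  simp only [Sph3, Set.mem_setOf_eq] at h
  constructor <;> nlinarith [norm_nonneg p.1.1, norm_nonneg p.1.2]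

lemma dist_exp_mul (c : ℝ) (hc : |c| ≤ 1) (z : ℂ) (hz : ‖z‖ ≤ 1) :
    dist (Complex.exp ((c : ℂ) * Complex.I) * z) z ≤ 2 * |c| := by
  rw [Complex.dist_eq]
  have : Complex.exp ((c : ℂ) * Complex.I) * z - z
      = (Complex.exp ((c : ℂ) * Complex.I) - 1) * z := by ring
  rw [this, norm_mul]
  have habs : ‖(c : ℂ) * Complex.I‖ = |c| := by
    simp [norm_mul]
  have h1 : ‖Complex.exp ((c : ℂ) * Complex.I) - 1‖
      ≤ 2 * ‖(c : ℂ) * Complex.I‖ :=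
    Complex.norm_exp_sub_one_le (by rw [habs]; exact hc)
  rw [habs] at h1
  calc ‖Complex.exp ((c : ℂ) * Complex.I) - 1‖ * ‖z‖
      ≤ (2 * |c|) * 1 := by
        apply mul_le_mul h1 hz (norm_nonneg _) (by positivity)
    _ = 2 * |c| := by ring

lemma dist_sAct {n : ℕ} (hn : n ≤ 2) {θ : ℝ} (hθ : |θ| ≤ 1 / 2) (p : ↥Sph3) :
    dist (sAct n θ p) p ≤ 4 * |θ| := by
  rw [Subtype.dist_eq, Prod.dist_eq]
  have hp := sph_abs_le p
  have h1 : dist (Complex.exp ((θ : ℂ) * Complex.I) * p.1.1) p.1.1 ≤ 2 * |θ| :=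
    dist_exp_mul θ (by linarith) _ hp.1
  have hna : |(n : ℝ) * θ| ≤ 2 * |θ| := by
    rw [abs_mul, Nat.abs_cast]
    have : (n : ℝ) ≤ 2 := by exact_mod_cast hn
    nlinarith [abs_nonneg θ]
  have h2 : dist (Complex.exp (((n * θ : ℝ) : ℂ) * Complex.I) * p.1.2) p.1.2
      ≤ 2 * |(n : ℝ) * θ| :=
    dist_exp_mul _ (by linarith) _ hp.2
  have hmax : max (dist (Complex.exp ((θ : ℂ) * Complex.I) * p.1.1) p.1.1)
      (dist (Complex.exp (((n * θ : ℝ) : ℂ) * Complex.I) * p.1.2) p.1.2) ≤ 4 * |θ| := by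
    have h0 := abs_nonneg θ
    apply max_le <;> linarith
  exact hmax
lemma free' {n : ℕ} (hn : n = 1 ∨ n = 2) {θ₁ θ₂ : ℝ} (h12 : θ₂ < θ₁)
    (hlt : θ₁ - θ₂ < Real.pi / 7) (p : ↥Sph3) (g : ZMod 7) :
    sAct n θ₁ p ≠ act n g (sAct n θ₂ p) := by
  intro h
  apply free hn (sub_pos.2 h12) hlt (sAct n θ₂ p) g
  rw [sAct_add, sub_add_cancel]
  exact h

/-- Minimal distance between the orbits of two points. -/
noncomputable def dd (n : ℕ) (x y : ↥Sph3) : ℝ :=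
  Finset.univ.inf' Finset.univ_nonempty fun g : ZMod 7 =>
    min (dist x (act n g y)) (dist y (act n g x))

lemma dd_le₁ (n : ℕ) (x y : ↥Sph3) (g : ZMod 7) : dd n x y ≤ dist x (act n g y) :=
  le_trans (Finset.inf'_le _ (Finset.mem_univ g)) (min_le_left _ _)

lemma dd_le₂ (n : ℕ) (x y : ↥Sph3) (g : ZMod 7) : dd n x y ≤ dist y (act n g x) :=
  le_trans (Finset.inf'_le _ (Finset.mem_univ g)) (min_le_right _ _)

lemma dd_pos {n : ℕ} {x y : ↥Sph3} (hx : ∀ g, x ≠ act n g y) (hy : ∀ g, y ≠ act n g x) :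
    0 < dd n x y := by
  rw [dd, Finset.lt_inf'_iff]
  intro g _
  exact lt_min (dist_pos.2 (hx g)) (dist_pos.2 (hy g))

lemma continuous_act (n : ℕ) (g : ZMod 7) : Continuous (act n g) := by
  apply Continuous.subtype_mk
  exact (continuous_const.mul ((continuous_fst.comp continuous_subtype_val))).prodMk
    (continuous_const.mul ((continuous_snd.comp continuous_subtype_val)))

lemma continuous_sAct_comp {n : ℕ} {X : Type} [TopologicalSpace X] {f : X → ℝ}
    {g : X → ↥Sph3} (hf : Continuous f) (hg : Continuous g) :
    Continuous fun x => sAct n (f x) (g x) := by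
  unfold sAct
  apply Continuous.subtype_mk
  apply Continuous.prodMk
  · exact (Complex.continuous_exp.comp
      ((Complex.continuous_ofReal.comp hf).mul continuous_const)).mul
      (continuous_fst.comp (continuous_subtype_val.comp hg))
  · exact (Complex.continuous_exp.comp
      ((Complex.continuous_ofReal.comp (continuous_const.mul hf)).mul continuous_const)).mul
      (continuous_snd.comp (continuous_subtype_val.comp hg))

lemma continuous_dd (n : ℕ) : Continuous fun q : ↥Sph3 × ↥Sph3 => dd n q.1 q.2 :=
  Continuous.finset_inf'_apply _ fun g _ =>
    (continuous_fst.dist ((continuous_act n g).comp continuous_snd)).min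
      (continuous_snd.dist ((continuous_act n g).comp continuous_fst))

/-- The scale used for the extra points. -/
noncomputable def eps (n k : ℕ) (y : OrbConf n 2) : ℝ :=
  min (Real.pi / (14 * k)) (min (1 / (2 * k)) (dd n (y.1 0) (y.1 1) / (8 * k)))

lemma continuous_eval (n : ℕ) (i : Fin 2) : Continuous fun y : OrbConf n 2 => y.1 i :=
  (continuous_apply i).comp continuous_subtype_val

lemma continuous_eps (n k : ℕ) : Continuous (eps n k) := by
  unfold eps
  apply continuous_const.min
  apply continuous_const.min
  exact ((continuous_dd n).comp
    ((continuous_eval n 0).prodMk (continuous_eval n 1))).div_const _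

/-- The underlying tuple of the section. -/
noncomputable def secmap (n k : ℕ) (y : OrbConf n 2) : Fin k → ↥Sph3 := fun i =>
  if i.val = 0 then y.1 0 else sAct n (eps n k y * ((i.val - 1 : ℕ) : ℝ)) (y.1 1)

lemma continuous_secmap (n k : ℕ) : Continuous (secmap n k) := by
  unfold secmap
  apply continuous_pi
  intro i
  by_cases hi : i.val = 0
  · simp only [if_pos hi]
    exact continuous_eval n 0
  · simp only [if_neg hi]
    exact continuous_sAct_comp ((continuous_eps n k).mul continuous_const) (continuous_eval n 1)

lemma secmap_mem (n : ℕ) (hn : n = 1 ∨ n = 2) (k : ℕ) (hk : 2 ≤ k) (y : OrbConf n 2) :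
    ∀ i j, i ≠ j → ∀ g : ZMod 7, secmap n k y i ≠ act n g (secmap n k y j) := by
  have hpi := Real.pi_pos
  have hn2 : n ≤ 2 := by rcases hn with h | h <;> omega
  set x₁ := y.1 0 with hx₁
  set x₂ := y.1 1 with hx₂
  set e := eps n k y with he
  set D := dd n x₁ x₂ with hDdef
  have hD : 0 < D := dd_pos (fun g => y.2 0 1 (by decide) g) (fun g => y.2 1 0 (by decide) g)
  have hkR : (2 : ℝ) ≤ (k : ℝ) := by exact_mod_cast hk
  have hk0 : (0 : ℝ) < k := by linarith
  have he_pos : 0 < e := by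
    refine lt_min (by positivity) (lt_min (by positivity) (by positivity))
  have he1 : e ≤ Real.pi / (14 * k) := min_le_left _ _
  have he2 : e ≤ 1 / (2 * k) := le_trans (min_le_right _ _) (min_le_left _ _)
  have he3 : e ≤ D / (8 * k) := le_trans (min_le_right _ _) (min_le_right _ _)
  have hek1 : e * k ≤ Real.pi / 14 := by
    calc e * k ≤ Real.pi / (14 * k) * k := mul_le_mul_of_nonneg_right he1 hk0.le
      _ = Real.pi / 14 := by field_simp
  have hek2 : e * k ≤ 1 / 2 := by
    calc e * k ≤ 1 / (2 * k) * k := mul_le_mul_of_nonneg_right he2 hk0.le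
      _ = 1 / 2 := by field_simp
  have hek3 : e * k ≤ D / 8 := by
    calc e * k ≤ D / (8 * k) * k := mul_le_mul_of_nonneg_right he3 hk0.le
      _ = D / 8 := by field_simp
  have t1a : ∀ g : ZMod 7, D ≤ dist x₁ (act n g x₂) := fun g => dd_le₁ n x₁ x₂ g
  have t1b : ∀ g : ZMod 7, D ≤ dist x₂ (act n g x₁) := fun g => dd_le₂ n x₁ x₂ g
  clear_value x₁ x₂ e D
  clear he1 he2 he3 hDdef
  -- bound for each index
  have key : ∀ i : Fin k, ((i.val - 1 : ℕ) : ℝ) ≤ (k : ℝ) := by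
    intro i
    have : i.val - 1 ≤ k := by omega
    exact_mod_cast this
  intro i j hij g h
  by_cases hi : i.val = 0 <;> by_cases hj : j.val = 0
  · exact hij (Fin.ext (hi.trans hj.symm))
  · -- i = 0, j ≠ 0 : x₁ = act g (sAct θ x₂)
    simp only [secmap, if_pos hi, if_neg hj] at h
    rw [← hx₁, ← hx₂, ← he] at h
    set θ := e * ((j.val - 1 : ℕ) : ℝ) with hθdef
    have hθ0 : 0 ≤ θ := by positivity
    have hθk : θ ≤ e * k := by
      have := key j
      nlinarith
    rw [act_sAct] at h
    have t1 : D ≤ dist x₁ (act n g x₂) := t1a g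
    have t2 : dist (sAct n θ (act n g x₂)) (act n g x₂) ≤ 4 * |θ| :=
      dist_sAct hn2 (by rw [_root_.abs_of_nonneg hθ0]; linarith) _
    rw [_root_.abs_of_nonneg hθ0] at t2
    have t3 := dist_triangle x₁ (sAct n θ (act n g x₂)) (act n g x₂)
    have h0 : dist x₁ (sAct n θ (act n g x₂)) = 0 := by rw [h, dist_self]
    linarith
  · -- i ≠ 0, j = 0 : sAct θ x₂ = act g x₁
    simp only [secmap, if_neg hi, if_pos hj] at h
    rw [← hx₁, ← hx₂, ← he] at h
    set θ := e * ((i.val - 1 : ℕ) : ℝ) with hθdef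
    have hθ0 : 0 ≤ θ := by positivity
    have hθk : θ ≤ e * k := by
      have := key i
      nlinarith
    have t1 : D ≤ dist x₂ (act n g x₁) := t1b g
    have t2 : dist (sAct n θ x₂) x₂ ≤ 4 * |θ| :=
      dist_sAct hn2 (by rw [_root_.abs_of_nonneg hθ0]; linarith) _
    rw [_root_.abs_of_nonneg hθ0] at t2
    have t3 := dist_triangle x₂ (sAct n θ x₂) (act n g x₁)
    have h0 : dist (sAct n θ x₂) (act n g x₁) = 0 := by rw [h, dist_self]
    rw [dist_comm x₂ (sAct n θ x₂)] at t3
    linarith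
  · -- both ≠ 0
    simp only [secmap, if_neg hi, if_neg hj] at h
    rw [← hx₂, ← he] at h
    set a := i.val - 1 with ha
    set b := j.val - 1 with hb
    have hab : a ≠ b := by
      have : i.val ≠ j.val := fun hc => hij (Fin.ext hc)
      omega
    have haK : (a : ℝ) ≤ k := key i
    have hbK : (b : ℝ) ≤ k := key j
    have hdiff : ∀ u v : ℕ, (v : ℝ) ≤ k → e * u < e * v → e * v - e * u < Real.pi / 7 := by
      intro u v hvK huv
      have : e * v ≤ e * k := by nlinarith
      nlinarith [mul_nonneg he_pos.le (Nat.cast_nonneg u)]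
    rcases Nat.lt_or_ge a b with hlt | hge
    · -- a < b : flip
      have h' : sAct n (e * b) x₂ = act n (-g) (sAct n (e * a) x₂) := by
        rw [h, act_act, neg_add_cancel, act_zero]
      have hba : e * a < e * b := by
        have : (a : ℝ) < b := by exact_mod_cast hlt
        nlinarith
      exact free' hn hba (hdiff a b hbK hba) x₂ (-g) h'
    · have hlt' : b < a := by omega
      have hba : e * b < e * a := by
        have : (b : ℝ) < a := by exact_mod_cast hlt'
        nlinarith
      exact free' hn hba (hdiff b a haK hba) x₂ g h

/-- The section as a function. -/
noncomputable def secfun (n : ℕ) (hn : n = 1 ∨ n = 2) (k : ℕ) (hk : 2 ≤ k)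
    (y : OrbConf n 2) : OrbConf n k :=
  ⟨secmap n k y, secmap_mem n hn k hk y⟩

lemma continuous_secfun (n : ℕ) (hn : n = 1 ∨ n = 2) (k : ℕ) (hk : 2 ≤ k) :
    Continuous (secfun n hn k hk) := by
  unfold secfun
  exact (continuous_secmap n k).subtype_mk _

theorem stmt_17 (n : ℕ) (hn : n = 1 ∨ n = 2) (k : ℕ) (hk : 2 ≤ k) :
    ∃ s : C(OrbConf n 2, OrbConf n k),
      ∀ (y : OrbConf n 2) (i : Fin 2), (s y).1 (Fin.castLE hk i) = y.1 i := by
  refine ⟨⟨secfun n hn k hk, continuous_secfun n hn k hk⟩, ?_⟩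
  intro y i
  fin_cases i
  · simp [secfun, secmap]
  · simp [secfun, secmap, sAct_zero]
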